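/- Let X, Y be Hilbert spaces, A : X → Y a nonzero bounded linear operator, f ∈ Y, and for α > 0 let φ(α) = (αI + A*A)^{-1} A* f. Then the residual function α ↦ ‖f − A φ(α)‖ is monotonically nondecreasing on (0, ∞), tends to ‖f‖ as α → ∞, and tends to the distance from f to the closure of the range of A as α → 0⁺. -/

import Mathlib

open ContinuousLinearMap Filter

lemma tikhonov_min
    {X Y : Type*} [NormedAddCommGroup X] [InnerProductSpace ℂ X] [CompleteSpace X]
    [NormedAddCommGroup Y] [InnerProductSpace ℂ Y] [CompleteSpace Y]
    (A : X →L[ℂ] Y) (f : Y) (α : ℝ) (hα : 0 ≤ α) (u : X)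
    (h : (α : ℂ) • u + adjoint A (A u) = adjoint A f) (ψ : X) :
    ‖A u - f‖ ^ 2 + α * ‖u‖ ^ 2 ≤ ‖A ψ - f‖ ^ 2 + α * ‖ψ‖ ^ 2 := by
  set v := ψ - u with hv
  have hψ : ψ = u + v := by simp [hv]
  have h1 : A ψ - f = (A u - f) + A v := by rw [hψ]; simp [map_add]; abel
  have e1 : ‖A ψ - f‖ ^ 2 = ‖A u - f‖ ^ 2 + 2 * RCLike.re (inner (𝕜 := ℂ) (A u - f) (A v)) + ‖A v‖ ^ 2 := by
    rw [h1]; exact norm_add_sq _ _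
  have e2 : ‖ψ‖ ^ 2 = ‖u‖ ^ 2 + 2 * RCLike.re (inner (𝕜 := ℂ) u v) + ‖v‖ ^ 2 := by
    rw [hψ]; exact norm_add_sq _ _
  have hadj : adjoint A (A u - f) = -((α : ℂ) • u) := by
    rw [map_sub]
    have := h
    rw [add_comm] at this
    rw [eq_sub_of_add_eq this]
    abel
  have cross : (inner (𝕜 := ℂ) (A u - f) (A v) : ℂ) = -((α : ℂ) * inner (𝕜 := ℂ) u v) := by
    rw [← ContinuousLinearMap.adjoint_inner_left, hadj, inner_neg_left, inner_smul_left,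
      Complex.conj_ofReal]
  have recross : RCLike.re (inner (𝕜 := ℂ) (A u - f) (A v)) = -(α * RCLike.re (inner (𝕜 := ℂ) u v)) := by
    rw [cross, map_neg]; simp [RCLike.re_to_complex, Complex.mul_re]
  have hv2 : (0:ℝ) ≤ ‖A v‖ ^ 2 := by positivity
  have hv3 : (0:ℝ) ≤ ‖v‖ ^ 2 := by positivity
  rw [e1, e2, recross]
  nlinarith [mul_nonneg hα hv3]

/-- For the Tikhonov solutions `φ(α)` of `(αI + A*A) φ(α) = A* f`, the residual
`α ↦ ‖f − A φ(α)‖` is nondecreasing on `(0, ∞)`, tends to `‖f‖` as `α → ∞`, and tends to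
the distance from `f` to the closure of the range of `A` as `α → 0⁺`. -/
theorem tikhonov_residual_monotone_limits
    {X Y : Type*} [NormedAddCommGroup X] [InnerProductSpace ℂ X] [CompleteSpace X]
    [NormedAddCommGroup Y] [InnerProductSpace ℂ Y] [CompleteSpace Y]
    (A : X →L[ℂ] Y) (hA : A ≠ 0) (f : Y) (φ : ℝ → X)
    (hφ : ∀ α : ℝ, 0 < α →
      ((α : ℂ) • (ContinuousLinearMap.id ℂ X) + (adjoint A).comp A) (φ α) = adjoint A f) :
    MonotoneOn (fun α => ‖f - A (φ α)‖) (Set.Ioi (0 : ℝ)) ∧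
    Tendsto (fun α => ‖f - A (φ α)‖) atTop (nhds ‖f‖) ∧
    Tendsto (fun α => ‖f - A (φ α)‖) (nhdsWithin 0 (Set.Ioi (0 : ℝ)))
      (nhds (Metric.infDist f (closure (Set.range A)))) := by
  have key : ∀ α : ℝ, 0 < α → ∀ ψ : X,
      ‖A (φ α) - f‖ ^ 2 + α * ‖φ α‖ ^ 2 ≤ ‖A ψ - f‖ ^ 2 + α * ‖ψ‖ ^ 2 := by
    intro α hα ψ
    apply tikhonov_min A f α hα.le (φ α) _ ψ
    have := hφ α hα
    simpa using this
  -- basic bound: α * ‖φ α‖² ≤ ‖f‖² and ‖A φ α - f‖ ≤ ‖f‖ related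
  have bound : ∀ α : ℝ, 0 < α → α * ‖φ α‖ ^ 2 ≤ ‖f‖ ^ 2 := by
    intro α hα
    have h := key α hα 0
    simp only [map_zero, zero_sub, norm_neg, norm_zero] at h
    nlinarith [sq_nonneg ‖A (φ α) - f‖]
  constructor
  · -- monotonicity
    intro α hα β hβ hab
    rcases hab.lt_or_eq with hlt | heq
    · simp only
      rw [norm_sub_rev f, norm_sub_rev f]
      have h1 := key α hα (φ β)
      have h2 := key β hβ (φ α)
      have hβα : (0:ℝ) < β - α := sub_pos.2 hlt
      have h5 : (β - α) * ‖A (φ α) - f‖ ^ 2 ≤ (β - α) * ‖A (φ β) - f‖ ^ 2 := by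
        nlinarith [mul_le_mul_of_nonneg_left h1 (le_of_lt (Set.mem_Ioi.mp hβ)),
          mul_le_mul_of_nonneg_left h2 (le_of_lt (Set.mem_Ioi.mp hα))]
      have h6 : ‖A (φ α) - f‖ ^ 2 ≤ ‖A (φ β) - f‖ ^ 2 :=
        le_of_mul_le_mul_left (by linarith) hβα
      exact le_of_pow_le_pow_left₀ two_ne_zero (norm_nonneg _) h6
    · rw [heq]
  constructor
  · -- limit at infinity
    have hs : Tendsto Real.sqrt atTop atTop := by
      apply tendsto_atTop_atTop.2
      intro b
      refine ⟨b ^ 2, fun a ha => ?_⟩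
      calc b ≤ |b| := le_abs_self b
        _ = Real.sqrt (b ^ 2) := (Real.sqrt_sq_eq_abs b).symm
        _ ≤ Real.sqrt a := Real.sqrt_le_sqrt ha
    have hg : Tendsto (fun α : ℝ => ‖A‖ * ‖f‖ / Real.sqrt α) atTop (nhds 0) :=
      Tendsto.div_atTop tendsto_const_nhds hs
    have hsq : Tendsto (fun α => ‖f - A (φ α)‖ - ‖f‖) atTop (nhds 0) := by
      apply squeeze_zero_norm' _ hg
      filter_upwards [eventually_gt_atTop (0:ℝ)] with α hα
      have hb := bound α hα
      have hsp : (0:ℝ) < Real.sqrt α := Real.sqrt_pos.2 hα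
      have h1 : Real.sqrt α * ‖φ α‖ ≤ ‖f‖ := by
        have := Real.sqrt_le_sqrt hb
        rwa [Real.sqrt_mul hα.le, Real.sqrt_sq (norm_nonneg _),
          Real.sqrt_sq (norm_nonneg _)] at this
      have h2 : ‖φ α‖ ≤ ‖f‖ / Real.sqrt α := by
        rw [le_div_iff₀ hsp]; linarith [mul_comm (Real.sqrt α) ‖φ α‖]
      have h3 : |‖f - A (φ α)‖ - ‖f‖| ≤ ‖A (φ α)‖ := by
        have := abs_norm_sub_norm_le (f - A (φ α)) f
        simpa using this
      have h4 : ‖A (φ α)‖ ≤ ‖A‖ * ‖φ α‖ := A.le_opNorm _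
      have h5 : ‖A‖ * ‖φ α‖ ≤ ‖A‖ * (‖f‖ / Real.sqrt α) :=
        mul_le_mul_of_nonneg_left h2 (norm_nonneg _)
      calc ‖‖f - A (φ α)‖ - ‖f‖‖ = |‖f - A (φ α)‖ - ‖f‖| := rfl
        _ ≤ ‖A (φ α)‖ := h3
        _ ≤ ‖A‖ * ‖φ α‖ := h4
        _ ≤ ‖A‖ * ‖f‖ / Real.sqrt α := by rw [mul_div_assoc]; exact h5
    have := hsq.add (tendsto_const_nhds (x := ‖f‖))
    simpa using this
  · -- limit at 0⁺
    set d := Metric.infDist f (closure (Set.range A)) with hd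
    have hdn : 0 ≤ d := Metric.infDist_nonneg
    have hlow : ∀ α : ℝ, 0 < α → d ≤ ‖f - A (φ α)‖ := by
      intro α hα
      rw [← dist_eq_norm]
      exact Metric.infDist_le_dist_of_mem (subset_closure ⟨φ α, rfl⟩)
    rw [Metric.tendsto_nhds]
    intro ε hε
    -- pick ψ with dist f (A ψ) < d + ε/2
    have hne : (Set.range (A : X → Y)).Nonempty := ⟨A 0, 0, rfl⟩
    have hlt : Metric.infDist f (Set.range (A : X → Y)) < d + ε / 2 := by
      rw [hd, Metric.infDist_closure]; linarith
    obtain ⟨y, ⟨ψ, rfl⟩, hy⟩ := (Metric.infDist_lt_iff hne).mp hlt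
    set δ := ((d + ε) ^ 2 - (d + ε / 2) ^ 2) / (‖ψ‖ ^ 2 + 1) with hδ
    have hδpos : 0 < δ := by
      apply div_pos
      · nlinarith
      · positivity
    filter_upwards [Ioo_mem_nhdsGT_of_mem (⟨le_refl (0:ℝ), hδpos⟩ : (0:ℝ) ∈ Set.Ico 0 δ)]
      with α hα
    obtain ⟨hα0, hαδ⟩ := hα
    have hk := key α hα0 ψ
    have hAψ : ‖A ψ - f‖ = dist f (A ψ) := by rw [dist_eq_norm, norm_sub_rev]
    have hup2 : ‖f - A (φ α)‖ ^ 2 < (d + ε) ^ 2 := by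
      have hδb : α * (‖ψ‖ ^ 2 + 1) < (d + ε) ^ 2 - (d + ε / 2) ^ 2 := by
        rw [hδ] at hαδ
        calc α * (‖ψ‖ ^ 2 + 1) < δ * (‖ψ‖ ^ 2 + 1) := by
              apply mul_lt_mul_of_pos_right hαδ; positivity
          _ = (d + ε) ^ 2 - (d + ε / 2) ^ 2 := by
              rw [hδ]; field_simp
      have hdist2 : dist f (A ψ) ^ 2 ≤ (d + ε / 2) ^ 2 :=
        pow_le_pow_left₀ dist_nonneg hy.le 2
      rw [norm_sub_rev]
      calc ‖A (φ α) - f‖ ^ 2 ≤ ‖A ψ - f‖ ^ 2 + α * ‖ψ‖ ^ 2 := by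
            nlinarith [mul_nonneg hα0.le (sq_nonneg ‖φ α‖)]
        _ < (d + ε) ^ 2 := by rw [hAψ]; nlinarith
    have hup : ‖f - A (φ α)‖ < d + ε :=
      lt_of_pow_lt_pow_left₀ 2 (by positivity) hup2
    have hl := hlow α hα0
    have : dist ‖f - A (φ α)‖ d < ε := by
      rw [Real.dist_eq, abs_lt]
      constructor <;> linarith
    exact this
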